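/- Let ν be a σ-finite measure on a measurable space (X, M) and let N ⊂ M be a family of measurable sets. Then ν can be decomposed uniquely as ν = ν_N + ν_N^⊥ where ν_N is carried by N (i.e., there exist countably many sets N_i ∈ N with ν_N(X \ ⋃ N_i) = 0) and ν_N^⊥ is singular to N (i.e., ν_N^⊥(N) = 0 for every N ∈ N). -/

import Mathlib

open MeasureTheory Set ENNReal

/-- Decomposition of a σ-finite measure into a part carried by a family `N` of measurable
sets and a part singular to `N`, and uniqueness of this decomposition. -/
theorem statement0 {X : Type*} [MeasurableSpace X] (ν : Measure X) [SigmaFinite ν]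
    (N : Set (Set X)) (hN : ∀ s ∈ N, MeasurableSet s) :
    ∃! p : Measure X × Measure X,
      ν = p.1 + p.2 ∧
      (∃ S : Set (Set X), S.Countable ∧ S ⊆ N ∧ p.1 (univ \ ⋃₀ S) = 0) ∧
      (∀ s ∈ N, p.2 s = 0) := by
  classical
  obtain ⟨μ, hμfin, hνμ, hμν⟩ := exists_isFiniteMeasure_absolutelyContinuous ν
  -- supremum of measures of countable unions of sets in N
  set c : ℝ≥0∞ := ⨆ (S : Set (Set X)) (_ : S.Countable ∧ S ⊆ N), μ (⋃₀ S) with hcdef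
  have hcle : c ≤ μ univ := iSup₂_le fun S _ => measure_mono (subset_univ _)
  have hcne : c ≠ ⊤ := (lt_of_le_of_lt hcle (measure_lt_top μ univ)).ne
  -- choose approximating sequence
  have hseq : ∀ n : ℕ, ∃ S : Set (Set X), (S.Countable ∧ S ⊆ N) ∧
      c - ((n : ℝ≥0∞) + 1)⁻¹ ≤ μ (⋃₀ S) := by
    intro n
    by_cases hc0 : c = 0
    · exact ⟨∅, ⟨countable_empty, empty_subset _⟩, by simp [hc0, zero_tsub]⟩
    · have hlt : c - ((n : ℝ≥0∞) + 1)⁻¹ < c :=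
        ENNReal.sub_lt_self hcne hc0 (ENNReal.inv_ne_zero.mpr (by simp))
      rw [hcdef] at hlt
      obtain ⟨S, hS2⟩ := lt_iSup_iff.mp hlt
      obtain ⟨hSN, h⟩ := lt_iSup_iff.mp hS2
      exact ⟨S, hSN, h.le⟩
  choose Sn hSn hSn' using hseq
  set S : Set (Set X) := ⋃ n, Sn n with hSdef
  have hScount : S.Countable := countable_iUnion fun n => (hSn n).1
  have hSsub : S ⊆ N := iUnion_subset fun n => (hSn n).2
  set U : Set X := ⋃₀ S with hUdef
  have hU : MeasurableSet U := MeasurableSet.sUnion hScount fun t ht => hN t (hSsub ht)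
  have hUle : μ U ≤ c := le_iSup₂_of_le S ⟨hScount, hSsub⟩ le_rfl
  have hUge : c ≤ μ U := by
    refine ENNReal.le_of_forall_pos_le_add fun ε hε _ => ?_
    obtain ⟨n, hn⟩ := ENNReal.exists_inv_nat_lt (a := (ε : ℝ≥0∞)) (by exact_mod_cast hε.ne')
    have h1 : μ (⋃₀ Sn n) ≤ μ U :=
      measure_mono (sUnion_subset_sUnion (subset_iUnion Sn n))
    have h2 : c - ((n : ℝ≥0∞) + 1)⁻¹ ≤ μ U := (hSn' n).trans h1
    have h3 : c ≤ μ U + ((n : ℝ≥0∞) + 1)⁻¹ := tsub_le_iff_right.mp h2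
    refine h3.trans (add_le_add_right ?_ _)
    refine le_of_lt (lt_of_le_of_lt ?_ hn)
    exact ENNReal.inv_le_inv.mpr (by simp)
  -- key maximality: every set in N is μ-a.e. contained in U
  have hkey : ∀ s ∈ N, ν (s \ U) = 0 := by
    intro s hs
    refine hνμ ?_
    have hins : μ (⋃₀ (insert s S)) ≤ c :=
      le_iSup₂_of_le (insert s S) ⟨hScount.insert s, insert_subset hs hSsub⟩ le_rfl
    rw [sUnion_insert] at hins
    have hsU : s ∪ U = U ∪ (s \ U) := by
      rw [union_comm, union_diff_self, union_comm]
    have hdisj : Disjoint U (s \ U) := disjoint_sdiff_right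
    have hmeas : MeasurableSet (s \ U) := (hN s hs).diff hU
    have : μ U + μ (s \ U) ≤ μ U + 0 := by
      rw [← measure_union hdisj hmeas, ← hsU, add_zero]
      exact hins.trans hUge
    have := (ENNReal.add_le_add_iff_left (measure_ne_top μ U)).mp this
    exact le_antisymm this zero_le
  refine ⟨(ν.restrict U, ν.restrict Uᶜ), ⟨(ν.restrict_add_restrict_compl hU).symm,
    ⟨S, hScount, hSsub, ?_⟩, fun s hs => ?_⟩, ?_⟩
  · rw [Measure.restrict_apply (MeasurableSet.univ.diff hU)]
    simp
  · rw [Measure.restrict_apply (hN s hs), ← diff_eq]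
    exact hkey s hs
  -- uniqueness
  rintro ⟨μ₁, μ₂⟩ ⟨hsum, ⟨T, hTc, hTN, hT0⟩, hsing⟩
  set V : Set X := ⋃₀ T with hVdef
  set W : Set X := U ∪ V with hWdef
  have hV : MeasurableSet V := MeasurableSet.sUnion hTc fun t ht => hN t (hTN ht)
  have hW : MeasurableSet W := hU.union hV
  have hμ₂W : μ₂ W = 0 := by
    rw [hWdef, hUdef, hVdef, ← sUnion_union]
    rw [measure_sUnion_null_iff (hScount.union hTc)]
    intro s hs
    rcases hs with hs | hs
    · exact hsing s (hSsub hs)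
    · exact hsing s (hTN hs)
  have hνWU : ν (W \ U) = 0 := by
    have hsub : W \ U ⊆ ⋃ t ∈ T, (t \ U) := by
      intro x hx
      rcases hx.1 with hx' | hx'
      · exact absurd hx' hx.2
      · obtain ⟨t, ht, hxt⟩ := hx'
        exact mem_biUnion ht ⟨hxt, hx.2⟩
    refine measure_mono_null hsub ?_
    rw [measure_biUnion_null_iff hTc]
    exact fun t ht => hkey t (hTN ht)
  have hμ₁Wc : μ₁ Wᶜ = 0 := by
    refine measure_mono_null ?_ hT0
    intro x hx
    exact ⟨trivial, fun hxV => hx (Or.inr hxV)⟩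
  have hνA : ∀ A : Set X, ν A = μ₁ A + μ₂ A := fun A => by rw [hsum]; rfl
  refine Prod.ext ?_ ?_
  · refine Measure.ext fun A hA => ?_
    show μ₁ A = ν.restrict U A
    have e1 : μ₁ A = μ₁ (A ∩ W) := by
      rw [← measure_inter_add_diff A hW]
      have : μ₁ (A \ W) = 0 := measure_mono_null (fun x hx => hx.2) hμ₁Wc
      rw [this, add_zero]
    have e2 : μ₂ (A ∩ W) = 0 := measure_mono_null inter_subset_right hμ₂W
    have e3 : ν (A ∩ W) = μ₁ A := by rw [hνA, e2, add_zero, ← e1]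
    have e4 : ν (A ∩ W) = ν (A ∩ U) := by
      rw [← measure_inter_add_diff (A ∩ W) hU]
      have h1 : A ∩ W ∩ U = A ∩ U := by
        rw [inter_assoc, inter_eq_right.mpr (subset_union_left : U ⊆ W)]
      have h2 : ν ((A ∩ W) \ U) = 0 :=
        measure_mono_null (diff_subset_diff_left inter_subset_right) hνWU
      rw [h1, h2, add_zero]
    rw [Measure.restrict_apply hA, ← e4, e3]
  · refine Measure.ext fun A hA => ?_
    show μ₂ A = ν.restrict Uᶜ A
    have e1 : μ₂ A = μ₂ (A \ W) := by
      rw [← measure_inter_add_diff A hW]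
      have : μ₂ (A ∩ W) = 0 := measure_mono_null inter_subset_right hμ₂W
      rw [this, zero_add]
    have e2 : μ₁ (A \ W) = 0 := measure_mono_null (fun x hx => hx.2) hμ₁Wc
    have e3 : ν (A \ W) = μ₂ A := by rw [hνA, e2, zero_add, ← e1]
    have e4 : ν (A \ U) = ν (A \ W) := by
      rw [← measure_inter_add_diff (A \ U) hW]
      have hsub : (A \ U) ∩ W ⊆ W \ U := fun x hx => ⟨hx.2, hx.1.2⟩
      have h1 : ν ((A \ U) ∩ W) = 0 := measure_mono_null hsub hνWU
      have h2 : (A \ U) \ W = A \ W := by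
        ext x
        constructor
        · rintro ⟨⟨hxA, _⟩, hxW⟩; exact ⟨hxA, hxW⟩
        · rintro ⟨hxA, hxW⟩; exact ⟨⟨hxA, fun hxU => hxW (Or.inl hxU)⟩, hxW⟩
      rw [h1, h2, zero_add]
    rw [Measure.restrict_apply hA, ← diff_eq, e4, e3]
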